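/- Let Ω ⊂ ℝ^N (N ≥ 2) be a bounded open domain with C² boundary and α ∈ (0,1), and let φ(x) = ∫_{ℝ^N \ Ω} |x-y|^{-(N+2α)} dy for x ∈ Ω. Then there exists a constant C > 0 such that for all x₁, x₂ ∈ Ω, |φ(x₁) - φ(x₂)| ≤ C (ρ(x₁)^{-1-2α} + ρ(x₂)^{-1-2α}) |x₁ - x₂|; in particular, φ is locally Lipschitz (C^{0,1}) in Ω. -/

import Mathlib

open MeasureTheory Metric Set Filter Topology

noncomputable section

variable {N : ℕ}

/-- The distance from `x` to the complement of `Ω`, denoted `ρ(x)` in the paper. -/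
def bdist (Ω : Set (EuclideanSpace ℝ (Fin N))) (x : EuclideanSpace ℝ (Fin N)) : ℝ :=
  Metric.infDist x Ωᶜ

/-- A set `Ω ⊆ ℝ^N` has `C²` boundary: near each boundary point, `Ω` is the sublevel set of a
`C²` function with nonvanishing differential. -/
def HasC2Boundary (Ω : Set (EuclideanSpace ℝ (Fin N))) : Prop :=
  ∀ x ∈ frontier Ω, ∃ (U : Set (EuclideanSpace ℝ (Fin N))) (ψ : EuclideanSpace ℝ (Fin N) → ℝ),
    IsOpen U ∧ x ∈ U ∧ ContDiff ℝ 2 ψ ∧ (∀ y ∈ U, fderiv ℝ ψ y ≠ 0) ∧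
    Ω ∩ U = {y ∈ U | ψ y < 0}

/-- `L` is the principal value of the regional fractional Laplacian `(-Δ)^α_Ω u (x)`. -/
def IsRegionalFracLap (Ω : Set (EuclideanSpace ℝ (Fin N))) (α : ℝ)
    (u : EuclideanSpace ℝ (Fin N) → ℝ) (x : EuclideanSpace ℝ (Fin N)) (L : ℝ) : Prop :=
  Tendsto (fun ε : ℝ => ∫ y in Ω \ Metric.ball x ε, (u x - u y) / ‖x - y‖ ^ ((N : ℝ) + 2 * α))
    (𝓝[>] (0 : ℝ)) (𝓝 L)

/-- `L` is the principal value of the (full) fractional Laplacian `(-Δ)^α u (x)`. -/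
def IsFracLap (α : ℝ) (u : EuclideanSpace ℝ (Fin N) → ℝ)
    (x : EuclideanSpace ℝ (Fin N)) (L : ℝ) : Prop :=
  Tendsto (fun ε : ℝ => ∫ y in (Metric.ball x ε)ᶜ, (u x - u y) / ‖x - y‖ ^ ((N : ℝ) + 2 * α))
    (𝓝[>] (0 : ℝ)) (𝓝 L)

open Classical in
/-- The test-function modification `ũ`, equal to `φ` on `V` and to `u` elsewhere. -/
def patch (V : Set (EuclideanSpace ℝ (Fin N))) (φ u : EuclideanSpace ℝ (Fin N) → ℝ) :
    EuclideanSpace ℝ (Fin N) → ℝ :=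
  fun y => if y ∈ V then φ y else u y

/-- `u` satisfies `(-Δ)^α_Ω u + f(u) ≥ g` in `Ω` in the viscosity sense. -/
def ViscSuper (Ω : Set (EuclideanSpace ℝ (Fin N))) (α : ℝ) (f : ℝ → ℝ)
    (g u : EuclideanSpace ℝ (Fin N) → ℝ) : Prop :=
  ∀ x₀ ∈ Ω, ∀ V : Set (EuclideanSpace ℝ (Fin N)), IsOpen V → x₀ ∈ V → closure V ⊆ Ω →
    ∀ φ : EuclideanSpace ℝ (Fin N) → ℝ, ContDiffOn ℝ 2 φ (closure V) → φ x₀ = u x₀ →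
      (∀ y ∈ V, u x₀ - φ x₀ ≤ u y - φ y) →
      ∃ L : ℝ, IsRegionalFracLap Ω α (patch V φ u) x₀ L ∧ g x₀ ≤ L + f (u x₀)

/-- `u` satisfies `(-Δ)^α_Ω u + f(u) ≤ g` in `Ω` in the viscosity sense. -/
def ViscSub (Ω : Set (EuclideanSpace ℝ (Fin N))) (α : ℝ) (f : ℝ → ℝ)
    (g u : EuclideanSpace ℝ (Fin N) → ℝ) : Prop :=
  ∀ x₀ ∈ Ω, ∀ V : Set (EuclideanSpace ℝ (Fin N)), IsOpen V → x₀ ∈ V → closure V ⊆ Ω →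
    ∀ φ : EuclideanSpace ℝ (Fin N) → ℝ, ContDiffOn ℝ 2 φ (closure V) → φ x₀ = u x₀ →
      (∀ y ∈ V, u y - φ y ≤ u x₀ - φ x₀) →
      ∃ L : ℝ, IsRegionalFracLap Ω α (patch V φ u) x₀ L ∧ L + f (u x₀) ≤ g x₀

/-- `u` satisfies `(-Δ)^α u + f(u) ≥ g` in `Ω` in the viscosity sense (full fractional
Laplacian). -/
def ViscSuperFrac (Ω : Set (EuclideanSpace ℝ (Fin N))) (α : ℝ) (f : ℝ → ℝ)
    (g u : EuclideanSpace ℝ (Fin N) → ℝ) : Prop :=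
  ∀ x₀ ∈ Ω, ∀ V : Set (EuclideanSpace ℝ (Fin N)), IsOpen V → x₀ ∈ V → closure V ⊆ Ω →
    ∀ φ : EuclideanSpace ℝ (Fin N) → ℝ, ContDiffOn ℝ 2 φ (closure V) → φ x₀ = u x₀ →
      (∀ y ∈ V, u x₀ - φ x₀ ≤ u y - φ y) →
      ∃ L : ℝ, IsFracLap α (patch V φ u) x₀ L ∧ g x₀ ≤ L + f (u x₀)

/-- `u` satisfies `(-Δ)^α u + f(u) ≤ g` in `Ω` in the viscosity sense (full fractional
Laplacian). -/
def ViscSubFrac (Ω : Set (EuclideanSpace ℝ (Fin N))) (α : ℝ) (f : ℝ → ℝ)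
    (g u : EuclideanSpace ℝ (Fin N) → ℝ) : Prop :=
  ∀ x₀ ∈ Ω, ∀ V : Set (EuclideanSpace ℝ (Fin N)), IsOpen V → x₀ ∈ V → closure V ⊆ Ω →
    ∀ φ : EuclideanSpace ℝ (Fin N) → ℝ, ContDiffOn ℝ 2 φ (closure V) → φ x₀ = u x₀ →
      (∀ y ∈ V, u y - φ y ≤ u x₀ - φ x₀) →
      ∃ L : ℝ, IsFracLap α (patch V φ u) x₀ L ∧ L + f (u x₀) ≤ g x₀

/-- `u(x) → +∞` as `x → ∂Ω` from inside `Ω`. -/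
def BlowsUp (Ω : Set (EuclideanSpace ℝ (Fin N))) (u : EuclideanSpace ℝ (Fin N) → ℝ) : Prop :=
  ∀ z ∈ frontier Ω, Tendsto u (𝓝[Ω] z) atTop

/-- A boundary blow-up viscosity solution of `(-Δ)^α_Ω u + f(u) = 0` in `Ω`,
`u = +∞` on `∂Ω`. -/
def IsBBSolution (Ω : Set (EuclideanSpace ℝ (Fin N))) (α : ℝ) (f : ℝ → ℝ)
    (u : EuclideanSpace ℝ (Fin N) → ℝ) : Prop :=
  ContinuousOn u Ω ∧ IntegrableOn u Ω volume ∧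
  ViscSuper Ω α f (fun _ => 0) u ∧ ViscSub Ω α f (fun _ => 0) u ∧ BlowsUp Ω u

/-- A viscosity solution of `(-Δ)^α_Ω u + f(u) = g` in `Ω`, `u = c` on `∂Ω` (the constant
boundary value being attained continuously). -/
def IsDirichletSol (Ω : Set (EuclideanSpace ℝ (Fin N))) (α : ℝ) (f : ℝ → ℝ)
    (g : EuclideanSpace ℝ (Fin N) → ℝ) (c : ℝ) (u : EuclideanSpace ℝ (Fin N) → ℝ) : Prop :=
  ContinuousOn u Ω ∧ IntegrableOn u Ω volume ∧
  ViscSuper Ω α f g u ∧ ViscSub Ω α f g u ∧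
  ∀ z ∈ frontier Ω, Tendsto u (𝓝[Ω] z) (𝓝 c)

/-- The `C^t = C^{t₀, t - t₀}` Hölder norm of `w` on `s` is at most `M` (for `t` a positive
noninteger with integer part `t₀ = ⌊t⌋`). -/
def CNormLE (t : ℝ) (w : EuclideanSpace ℝ (Fin N) → ℝ)
    (s : Set (EuclideanSpace ℝ (Fin N))) (M : ℝ) : Prop :=
  ContDiffOn ℝ (⌊t⌋₊ : ℕ) w s ∧
  (∀ k : ℕ, k ≤ ⌊t⌋₊ → ∀ x ∈ s, ‖iteratedFDerivWithin ℝ k w s x‖ ≤ M) ∧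
  ∀ x ∈ s, ∀ y ∈ s,
    ‖iteratedFDerivWithin ℝ ⌊t⌋₊ w s x - iteratedFDerivWithin ℝ ⌊t⌋₊ w s y‖ ≤
      M * ‖x - y‖ ^ (t - (⌊t⌋₊ : ℝ))

/-- `w` is locally `C^t` in the open set `Ω`. -/
def LocallyCNorm (t : ℝ) (w : EuclideanSpace ℝ (Fin N) → ℝ)
    (Ω : Set (EuclideanSpace ℝ (Fin N))) : Prop :=
  ∀ x ∈ Ω, ∃ r > 0, Metric.ball x r ⊆ Ω ∧ ∃ M : ℝ, CNormLE t w (Metric.ball x r) M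

/-- `t` is not an integer. -/
def NotNatural (t : ℝ) : Prop := ¬ ∃ n : ℕ, t = n
namespace St16Aux

open Real


lemma aux_cont {n : ℕ} (s : ℝ) {t : Set (EuclideanSpace ℝ (Fin n))}
    (ht : ∀ z ∈ t, z ≠ 0) :
    ContinuousOn (fun z : EuclideanSpace ℝ (Fin n) => ‖z‖ ^ (-s)) t :=
  ContinuousOn.rpow_const continuous_norm.continuousOn
    (fun z hz => Or.inl (norm_ne_zero_iff.2 (ht z hz)))

lemma aux_int {n : ℕ} {s : ℝ} (hs : (n : ℝ) < s) {d : ℝ} (hd : 0 < d) :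
    IntegrableOn (fun z : EuclideanSpace ℝ (Fin n) => ‖z‖ ^ (-s)) (ball 0 d)ᶜ volume := by
  have h1 : IntegrableOn (fun z : EuclideanSpace ℝ (Fin n) => ‖z‖ ^ (-s))
      (closedBall 0 1)ᶜ volume := by
    have hint : Integrable (fun z : EuclideanSpace ℝ (Fin n) => (2:ℝ)^s * (1 + ‖z‖) ^ (-s)) := by
      refine (integrable_one_add_norm ?_).const_mul _
      rwa [finrank_euclideanSpace_fin]
    refine Integrable.mono' hint.integrableOn
      ((aux_cont s (fun z hz => ?_)).aestronglyMeasurable measurableSet_closedBall.compl) ?_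
    · rintro rfl
      simp [mem_compl_iff, mem_closedBall_zero_iff] at hz
    filter_upwards [ae_restrict_mem measurableSet_closedBall.compl] with z hz
    have h1z : 1 < ‖z‖ := by
      simpa [mem_closedBall_zero_iff] using hz
    have hz0 : (0:ℝ) < ‖z‖ := by linarith
    rw [Real.norm_eq_abs, abs_of_nonneg (rpow_nonneg (norm_nonneg _) _)]
    have hs0 : 0 < s := lt_of_le_of_lt (Nat.cast_nonneg n) hs
    have h2 : (2 * ‖z‖) ^ (-s) ≤ (1 + ‖z‖) ^ (-s) :=
      Real.rpow_le_rpow_of_nonpos (by linarith) (by linarith) (by linarith)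
    have h3 : (2 * ‖z‖ : ℝ) ^ (-s) = 2 ^ (-s) * ‖z‖ ^ (-s) :=
      Real.mul_rpow (by norm_num) (norm_nonneg _)
    have h4 : (2:ℝ)^s * (2:ℝ)^(-s) = 1 := by
      rw [← Real.rpow_add (by norm_num)]; simp
    calc ‖z‖ ^ (-s) = (2:ℝ)^s * ((2*‖z‖)^(-s)) := by
          rw [h3, ← mul_assoc, h4, one_mul]
      _ ≤ (2:ℝ)^s * (1+‖z‖)^(-s) :=
          mul_le_mul_of_nonneg_left h2 (rpow_nonneg (by norm_num) _)
  have h2 : IntegrableOn (fun z : EuclideanSpace ℝ (Fin n) => ‖z‖ ^ (-s))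
      (closedBall 0 1 \ ball 0 d) volume := by
    apply ContinuousOn.integrableOn_compact ((isCompact_closedBall _ _).diff isOpen_ball)
    apply ContinuousOn.rpow_const continuous_norm.continuousOn
    intro z hz
    left
    have : d ≤ ‖z‖ := by
      have h := hz.2
      simpa [mem_ball_zero_iff, not_lt] using h
    exact ne_of_gt (lt_of_lt_of_le hd this)
  refine (h1.union h2).mono_set ?_
  intro z hz
  rcases le_or_gt ‖z‖ 1 with h | h
  · exact Or.inr ⟨mem_closedBall_zero_iff.2 h, hz⟩
  · exact Or.inl (by simpa [mem_closedBall_zero_iff] using h.not_ge)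

lemma aux_val {n : ℕ} (hn : 1 ≤ n) {s : ℝ} (hs : (n : ℝ) < s) {d : ℝ} (hd : 0 < d) :
    ∫ z in (ball (0 : EuclideanSpace ℝ (Fin n)) d)ᶜ, ‖z‖ ^ (-s) =
      ((n : ℝ) * (volume (ball (0 : EuclideanSpace ℝ (Fin n)) 1)).toReal / (s - n)) *
        d ^ ((n : ℝ) - s) := by
  haveI : Nontrivial (EuclideanSpace ℝ (Fin n)) :=
    Module.nontrivial_of_finrank_pos (R := ℝ)
      (by rw [finrank_euclideanSpace_fin]; omega)
  set g : ℝ → ℝ := fun r => Set.indicator (Ici d) (fun r => r ^ (-s)) r with hg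
  have key : ∫ z in (ball (0 : EuclideanSpace ℝ (Fin n)) d)ᶜ, ‖z‖ ^ (-s)
      = ∫ z : EuclideanSpace ℝ (Fin n), g ‖z‖ := by
    rw [← integral_indicator measurableSet_ball.compl]
    congr 1
    ext z
    by_cases h : z ∈ (ball (0 : EuclideanSpace ℝ (Fin n)) d)ᶜ
    · have h' : ‖z‖ ∈ Ici d := by
        simpa [mem_ball_zero_iff, not_lt] using h
      rw [Set.indicator_of_mem h, hg]
      simp only [Set.indicator_of_mem h']
    · have h' : ‖z‖ ∉ Ici d := by
        simp only [mem_compl_iff, not_not] at h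
        simpa [mem_Ici, not_le] using mem_ball_zero_iff.1 h
      rw [Set.indicator_of_notMem h, hg]
      simp only [Set.indicator_of_notMem h']
  rw [key, MeasureTheory.integral_fun_norm_addHaar volume g]
  simp only [finrank_euclideanSpace_fin, smul_eq_mul, nsmul_eq_mul]
  have step1 : ∫ y in Ioi (0:ℝ), y ^ (n - 1) * g y
      = ∫ y in Ioi (0:ℝ), Set.indicator (Ici d) (fun r => r ^ (n-1) * r ^ (-s)) y := by
    refine integral_congr_ae (Filter.Eventually.of_forall fun y => ?_)
    by_cases h : y ∈ Ici d
    · simp [hg, Set.indicator_of_mem h, smul_eq_mul]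
    · simp [hg, Set.indicator_of_notMem h, smul_eq_mul]
  rw [step1, setIntegral_indicator measurableSet_Ici]
  have hinter : Ioi (0:ℝ) ∩ Ici d = Ici d :=
    inter_eq_right.2 (fun y hy => lt_of_lt_of_le hd hy)
  rw [hinter, integral_Ici_eq_integral_Ioi]
  have step2 : ∫ y in Ioi d, y ^ (n-1) * y ^ (-s)
      = ∫ y in Ioi d, y ^ ((n : ℝ) - 1 - s) := by
    refine setIntegral_congr_fun measurableSet_Ioi (fun y hy => ?_)
    have hy0 : (0:ℝ) < y := lt_trans hd hy
    rw [← Real.rpow_natCast y (n-1), ← Real.rpow_add hy0]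
    congr 1
    have : ((n - 1 : ℕ) : ℝ) = (n : ℝ) - 1 := by
      push_cast [Nat.cast_sub hn]; ring
    rw [this]; ring
  rw [step2, integral_Ioi_rpow_of_lt (by linarith) hd]
  have he : (n : ℝ) - 1 - s + 1 = (n : ℝ) - s := by ring
  rw [he]
  have hne : s - (n:ℝ) ≠ 0 := by linarith
  have hne2 : (n:ℝ) - s ≠ 0 := by linarith
  have hdiv : -d ^ ((n:ℝ) - s) / ((n:ℝ) - s) = d ^ ((n:ℝ) - s) / (s - n) := by
    rw [div_eq_div_iff hne2 hne]; ring
  rw [hdiv]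
  rw [measureReal_def]
  ring

lemma aux_preimage {n : ℕ} (x : EuclideanSpace ℝ (Fin n)) {d : ℝ} :
    (fun z : EuclideanSpace ℝ (Fin n) => x - z) ⁻¹' (ball x d)ᶜ = (ball 0 d)ᶜ := by
  ext z
  simp only [mem_preimage, mem_compl_iff, mem_ball, dist_eq_norm]
  constructor <;> intro h h2 <;> apply h
  · simpa [sub_sub_cancel_left] using h2
  · simpa [sub_sub_cancel_left] using h2

lemma aux_trans {n : ℕ} {s : ℝ} (x : EuclideanSpace ℝ (Fin n)) {d : ℝ} :
    (∫ y in (ball x d)ᶜ, ‖x - y‖ ^ (-s)) =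
      ∫ z in (ball (0 : EuclideanSpace ℝ (Fin n)) d)ᶜ, ‖z‖ ^ (-s) := by
  have hT : MeasurePreserving (fun z : EuclideanSpace ℝ (Fin n) => x - z) volume volume :=
    Measure.measurePreserving_sub_left volume x
  have hemb : MeasurableEmbedding (fun z : EuclideanSpace ℝ (Fin n) => x - z) :=
    (MeasurableEquiv.subLeft x).measurableEmbedding
  have := hT.setIntegral_preimage_emb hemb
    (fun y => ‖x - y‖ ^ (-s)) (ball x d)ᶜ
  rw [aux_preimage] at this
  rw [← this]
  refine setIntegral_congr_fun measurableSet_ball.compl (fun z _ => ?_)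
  simp [sub_sub_cancel]

lemma aux_trans_int {n : ℕ} {s : ℝ} (x : EuclideanSpace ℝ (Fin n)) {d : ℝ}
    (h : IntegrableOn (fun z : EuclideanSpace ℝ (Fin n) => ‖z‖ ^ (-s)) (ball 0 d)ᶜ volume) :
    IntegrableOn (fun y => ‖x - y‖ ^ (-s)) (ball x d)ᶜ volume := by
  have hT : MeasurePreserving (fun z : EuclideanSpace ℝ (Fin n) => x - z) volume volume :=
    Measure.measurePreserving_sub_left volume x
  have hemb : MeasurableEmbedding (fun z : EuclideanSpace ℝ (Fin n) => x - z) :=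
    (MeasurableEquiv.subLeft x).measurableEmbedding
  rw [← hT.integrableOn_comp_preimage hemb, aux_preimage]
  refine h.congr_fun (fun z _ => ?_) measurableSet_ball.compl
  simp [sub_sub_cancel]

lemma aux_main {n : ℕ} (hn : 1 ≤ n) {s : ℝ} (hs : (n : ℝ) < s)
    (Ω : Set (EuclideanSpace ℝ (Fin n))) {x : EuclideanSpace ℝ (Fin n)} {d : ℝ}
    (hd : 0 < d) (hdist : ∀ y ∈ Ωᶜ, d ≤ dist x y) (hΩ : MeasurableSet Ω) :
    IntegrableOn (fun y => ‖x - y‖ ^ (-s)) Ωᶜ volume ∧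
    (∫ y in Ωᶜ, ‖x - y‖ ^ (-s)) ≤
      ((n : ℝ) * (volume (ball (0 : EuclideanSpace ℝ (Fin n)) 1)).toReal / (s - n)) *
        d ^ ((n : ℝ) - s) := by
  have hsub : Ωᶜ ⊆ (ball x d)ᶜ := by
    intro y hy
    simp only [mem_compl_iff, mem_ball, not_lt]
    rw [dist_comm]
    exact hdist y hy
  have hint : IntegrableOn (fun y => ‖x - y‖ ^ (-s)) (ball x d)ᶜ volume :=
    aux_trans_int x (aux_int hs hd)
  refine ⟨hint.mono_set hsub, ?_⟩
  calc (∫ y in Ωᶜ, ‖x - y‖ ^ (-s)) ≤ ∫ y in (ball x d)ᶜ, ‖x - y‖ ^ (-s) := by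
        refine setIntegral_mono_set hint ?_ (HasSubset.Subset.eventuallyLE hsub)
        exact Filter.Eventually.of_forall (fun y => rpow_nonneg (norm_nonneg _) _)
    _ = _ := by rw [aux_trans x, aux_val hn hs hd]

lemma aux_mvt {s : ℝ} (hs : 0 < s) {a b : ℝ} (ha : 0 < a) (hb : 0 < b) :
    |a ^ (-s) - b ^ (-s)| ≤ s * (a ^ (-s - 1) + b ^ (-s - 1)) * |a - b| := by
  have H : ∀ a b : ℝ, 0 < a → 0 < b → a ≤ b →
      |a ^ (-s) - b ^ (-s)| ≤ s * (a ^ (-s - 1) + b ^ (-s - 1)) * |a - b| := by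
    intro a b ha hb hab
    have key : ‖b ^ (-s) - a ^ (-s)‖ ≤ (s * a ^ (-s - 1)) * ‖b - a‖ := by
      refine Convex.norm_image_sub_le_of_norm_hasDerivWithin_le
        (f := fun u : ℝ => u ^ (-s)) (f' := fun t => (-s) * t ^ (-s - 1))
        (fun t ht => ?_) (fun t ht => ?_) (convex_Icc a b)
        (left_mem_Icc.2 hab) (right_mem_Icc.2 hab)
      · have ht0 : 0 < t := lt_of_lt_of_le ha ht.1
        exact (Real.hasDerivAt_rpow_const (p := -s) (Or.inl ht0.ne')).hasDerivWithinAt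
      · have ht0 : 0 < t := lt_of_lt_of_le ha ht.1
        rw [Real.norm_eq_abs, abs_mul, abs_neg, abs_of_nonneg hs.le,
          abs_of_nonneg (rpow_nonneg ht0.le _)]
        exact mul_le_mul_of_nonneg_left
          (Real.rpow_le_rpow_of_nonpos ha ht.1 (by linarith)) hs.le
    rw [Real.norm_eq_abs, Real.norm_eq_abs] at key
    rw [abs_sub_comm, abs_sub_comm a b]
    calc |b ^ (-s) - a ^ (-s)| ≤ (s * a ^ (-s - 1)) * |b - a| := key
      _ ≤ s * (a ^ (-s - 1) + b ^ (-s - 1)) * |b - a| := by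
          refine mul_le_mul_of_nonneg_right ?_ (abs_nonneg _)
          refine mul_le_mul_of_nonneg_left ?_ hs.le
          exact le_add_of_nonneg_right (rpow_nonneg hb.le _)
  rcases le_total a b with h | h
  · exact H a b ha hb h
  · have := H b a hb ha h
    rw [abs_sub_comm, abs_sub_comm b a] at this
    rw [add_comm] at this
    exact this

end St16Aux

/-- Lemma 2.1, Lipschitz estimate: for
`φ(x) = ∫_{ℝ^N \ Ω} |x-y|^{-(N+2α)} dy` there is `C > 0` with
`|φ(x₁) - φ(x₂)| ≤ C (ρ(x₁)^{-1-2α} + ρ(x₂)^{-1-2α}) |x₁ - x₂|` for all `x₁, x₂ ∈ Ω`;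
in particular `φ` is locally Lipschitz in `Ω`. -/
theorem statement16
    (N : ℕ) (hN : 2 ≤ N) (Ω : Set (EuclideanSpace ℝ (Fin N)))
    (hΩo : IsOpen Ω) (hΩb : Bornology.IsBounded Ω) (hΩconn : IsConnected Ω)
    (hΩbd : HasC2Boundary Ω)
    (α : ℝ) (hα1 : 0 < α) (hα2 : α < 1) :
    (∃ C : ℝ, 0 < C ∧
      ∀ x₁ ∈ Ω, ∀ x₂ ∈ Ω,
        |(∫ y in Ωᶜ, ‖x₁ - y‖ ^ (-((N : ℝ) + 2 * α))) -
            ∫ y in Ωᶜ, ‖x₂ - y‖ ^ (-((N : ℝ) + 2 * α))| ≤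
          C * (bdist Ω x₁ ^ (-1 - 2 * α) + bdist Ω x₂ ^ (-1 - 2 * α)) * ‖x₁ - x₂‖) ∧
    ∀ x ∈ Ω, ∃ r > 0, Metric.ball x r ⊆ Ω ∧ ∃ K : NNReal,
      LipschitzOnWith K
        (fun z : EuclideanSpace ℝ (Fin N) => ∫ y in Ωᶜ, ‖z - y‖ ^ (-((N : ℝ) + 2 * α)))
        (Metric.ball x r) := by
  classical
  have hn1 : 1 ≤ N := by omega
  have hNnn : (0:ℝ) ≤ (N:ℝ) := Nat.cast_nonneg N
  set s : ℝ := (N:ℝ) + 2*α with hsdef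
  have hsN : (N:ℝ) < s := by rw [hsdef]; linarith
  have hsN' : (N:ℝ) < s + 1 := by linarith
  have hs0 : 0 < s := by rw [hsdef]; linarith
  haveI : Nontrivial (EuclideanSpace ℝ (Fin N)) :=
    Module.nontrivial_of_finrank_pos (R := ℝ) (by rw [finrank_euclideanSpace_fin]; omega)
  have hcne : Ωᶜ.Nonempty := by
    rcases eq_empty_or_nonempty Ωᶜ with h | h
    · exact absurd (compl_empty_iff.1 h ▸ hΩb) (NormedSpace.unbounded_univ ℝ _)
    · exact h
  have hbd : ∀ x ∈ Ω, 0 < bdist Ω x := by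
    intro x hx
    exact (hΩo.isClosed_compl.notMem_iff_infDist_pos hcne).1 (by simpa using hx)
  have hdistle : ∀ (x : EuclideanSpace ℝ (Fin N)), ∀ y ∈ Ωᶜ, bdist Ω x ≤ dist x y :=
    fun x y hy => Metric.infDist_le_dist_of_mem hy
  set κ : ℝ :=
    (N : ℝ) * (volume (Metric.ball (0 : EuclideanSpace ℝ (Fin N)) 1)).toReal / ((s+1) - N)
    with hκdef
  have hκ0 : 0 ≤ κ := by
    refine div_nonneg (by positivity) ?_
    linarith
  have hexp : (N : ℝ) - (s + 1) = -1 - 2*α := by rw [hsdef]; ring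
  have hC0 : 0 < s * κ + 1 := by nlinarith [mul_nonneg hs0.le hκ0]
  have key : ∀ x ∈ Ω,
      IntegrableOn (fun y => ‖x - y‖ ^ (-s)) Ωᶜ volume ∧
      IntegrableOn (fun y => ‖x - y‖ ^ (-(s+1))) Ωᶜ volume ∧
      (∫ y in Ωᶜ, ‖x - y‖ ^ (-(s+1))) ≤ κ * bdist Ω x ^ (-1 - 2*α) := by
    intro x hx
    have hd := hbd x hx
    have h1 := St16Aux.aux_main hn1 hsN Ω hd (hdistle x) hΩo.measurableSet
    have h2 := St16Aux.aux_main hn1 hsN' Ω hd (hdistle x) hΩo.measurableSet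
    refine ⟨h1.1, h2.1, le_trans h2.2 ?_⟩
    rw [hexp, hκdef]
  have habs : ∀ x₁ ∈ Ω, ∀ x₂ ∈ Ω,
      |(∫ y in Ωᶜ, ‖x₁ - y‖ ^ (-s)) - ∫ y in Ωᶜ, ‖x₂ - y‖ ^ (-s)| ≤
        (s * κ + 1) * (bdist Ω x₁ ^ (-1 - 2 * α) + bdist Ω x₂ ^ (-1 - 2 * α)) * ‖x₁ - x₂‖ := by
    intro x₁ hx₁ x₂ hx₂
    obtain ⟨hi1, hg1, hb1⟩ := key x₁ hx₁
    obtain ⟨hi2, hg2, hb2⟩ := key x₂ hx₂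
    have hpt : ∀ y ∈ Ωᶜ, |‖x₁ - y‖ ^ (-s) - ‖x₂ - y‖ ^ (-s)| ≤
        (s * ‖x₁ - x₂‖) * (‖x₁ - y‖ ^ (-(s+1)) + ‖x₂ - y‖ ^ (-(s+1))) := by
      intro y hy
      have ha : 0 < ‖x₁ - y‖ := by
        have h := hdistle x₁ y hy; rw [dist_eq_norm] at h; linarith [hbd x₁ hx₁]
      have hb' : 0 < ‖x₂ - y‖ := by
        have h := hdistle x₂ y hy; rw [dist_eq_norm] at h; linarith [hbd x₂ hx₂]
      have h1 := St16Aux.aux_mvt hs0 ha hb'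
      have h2 : |‖x₁ - y‖ - ‖x₂ - y‖| ≤ ‖x₁ - x₂‖ := by
        have h := abs_norm_sub_norm_le (x₁ - y) (x₂ - y)
        simpa [sub_sub_sub_cancel_right] using h
      have he1 : -s - 1 = -(s+1) := by ring
      rw [he1] at h1
      have hnn : 0 ≤ s * (‖x₁ - y‖ ^ (-(s+1)) + ‖x₂ - y‖ ^ (-(s+1))) := by
        have q1 := Real.rpow_nonneg (norm_nonneg (x₁ - y)) (-(s+1))
        have q2 := Real.rpow_nonneg (norm_nonneg (x₂ - y)) (-(s+1))
        nlinarith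
      calc |‖x₁ - y‖ ^ (-s) - ‖x₂ - y‖ ^ (-s)|
          ≤ s * (‖x₁ - y‖ ^ (-(s+1)) + ‖x₂ - y‖ ^ (-(s+1))) * |‖x₁ - y‖ - ‖x₂ - y‖| := h1
        _ ≤ s * (‖x₁ - y‖ ^ (-(s+1)) + ‖x₂ - y‖ ^ (-(s+1))) * ‖x₁ - x₂‖ :=
            mul_le_mul_of_nonneg_left h2 hnn
        _ = _ := by ring
    have hr1 : 0 ≤ bdist Ω x₁ ^ (-1 - 2*α) := Real.rpow_nonneg Metric.infDist_nonneg _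
    have hr2 : 0 ≤ bdist Ω x₂ ^ (-1 - 2*α) := Real.rpow_nonneg Metric.infDist_nonneg _
    calc |(∫ y in Ωᶜ, ‖x₁ - y‖ ^ (-s)) - ∫ y in Ωᶜ, ‖x₂ - y‖ ^ (-s)|
        = |∫ y in Ωᶜ, (‖x₁ - y‖ ^ (-s) - ‖x₂ - y‖ ^ (-s))| := by
          rw [integral_sub hi1 hi2]
      _ ≤ ∫ y in Ωᶜ, |‖x₁ - y‖ ^ (-s) - ‖x₂ - y‖ ^ (-s)| := by
          simpa [Real.norm_eq_abs] using
            norm_integral_le_integral_norm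
              (f := fun y => ‖x₁ - y‖ ^ (-s) - ‖x₂ - y‖ ^ (-s))
              (μ := volume.restrict Ωᶜ)
      _ ≤ ∫ y in Ωᶜ, (s * ‖x₁ - x₂‖) * (‖x₁ - y‖ ^ (-(s+1)) + ‖x₂ - y‖ ^ (-(s+1))) :=
          setIntegral_mono_on (hi1.sub hi2).abs ((hg1.add hg2).const_mul _)
            hΩo.isClosed_compl.measurableSet hpt
      _ = (s * ‖x₁ - x₂‖) *
            ((∫ y in Ωᶜ, ‖x₁ - y‖ ^ (-(s+1))) + ∫ y in Ωᶜ, ‖x₂ - y‖ ^ (-(s+1))) := by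
          rw [integral_const_mul, integral_add hg1 hg2]
      _ ≤ (s * ‖x₁ - x₂‖) *
            (κ * bdist Ω x₁ ^ (-1 - 2*α) + κ * bdist Ω x₂ ^ (-1 - 2*α)) :=
          mul_le_mul_of_nonneg_left (add_le_add hb1 hb2)
            (mul_nonneg hs0.le (norm_nonneg _))
      _ ≤ (s * κ + 1) * (bdist Ω x₁ ^ (-1 - 2 * α) + bdist Ω x₂ ^ (-1 - 2 * α)) * ‖x₁ - x₂‖ := by
          nlinarith [mul_nonneg (add_nonneg hr1 hr2) (norm_nonneg (x₁ - x₂))]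
  refine ⟨⟨s * κ + 1, hC0, habs⟩, ?_⟩
  intro x hx
  have hdx := hbd x hx
  set r : ℝ := bdist Ω x / 2 with hrdef
  have hrpos : 0 < r := by rw [hrdef]; linarith
  have hball : Metric.ball x r ⊆ Ω := by
    intro z hz
    by_contra hzc
    have h1 := hdistle x z hzc
    have h2 : dist x z < r := by rw [dist_comm]; exact Metric.mem_ball.1 hz
    rw [hrdef] at h2
    linarith
  have hbdz : ∀ z ∈ Metric.ball x r, r ≤ bdist Ω z := by
    intro z hz
    by_contra h
    push_neg at h
    obtain ⟨y, hy, hdy⟩ := (Metric.infDist_lt_iff hcne).1 h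
    have h1 := hdistle x y hy
    have h2 : dist x z < r := by rw [dist_comm]; exact Metric.mem_ball.1 hz
    have h3 : dist x y ≤ dist x z + dist z y := dist_triangle x z y
    rw [hrdef] at h2 hdy
    linarith
  refine ⟨r, hrpos, hball,
    Real.toNNReal ((s * κ + 1) * (2 * r ^ (-1 - 2*α))), ?_⟩
  apply LipschitzOnWith.of_dist_le_mul
  intro z₁ hz₁ z₂ hz₂
  have hC : 0 ≤ (s * κ + 1) * (2 * r ^ (-1 - 2*α)) := by positivity
  rw [Real.coe_toNNReal _ hC, Real.dist_eq]
  have h1 := habs z₁ (hball hz₁) z₂ (hball hz₂)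
  have hb1 : bdist Ω z₁ ^ (-1 - 2*α) ≤ r ^ (-1 - 2*α) :=
    Real.rpow_le_rpow_of_nonpos hrpos (hbdz z₁ hz₁) (by linarith)
  have hb2 : bdist Ω z₂ ^ (-1 - 2*α) ≤ r ^ (-1 - 2*α) :=
    Real.rpow_le_rpow_of_nonpos hrpos (hbdz z₂ hz₂) (by linarith)
  calc |(∫ y in Ωᶜ, ‖z₁ - y‖ ^ (-s)) - ∫ y in Ωᶜ, ‖z₂ - y‖ ^ (-s)|
      ≤ (s * κ + 1) * (bdist Ω z₁ ^ (-1 - 2 * α) + bdist Ω z₂ ^ (-1 - 2 * α)) * ‖z₁ - z₂‖ := h1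
    _ ≤ (s * κ + 1) * (2 * r ^ (-1 - 2*α)) * dist z₁ z₂ := by
        rw [dist_eq_norm]
        refine mul_le_mul_of_nonneg_right ?_ (norm_nonneg _)
        exact mul_le_mul_of_nonneg_left (by linarith) hC0.le
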